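/- If vertex i is ρ̃-recurrent for some density ρ̃ on the finite-dimensional space h_i, then i is ρ-recurrent for every faithful (strictly positive definite) density ρ on h_i. -/

import Mathlib

open Matrix MeasureTheory ComplexOrder

/-- Embedding of an internal-state operator `ρ` at site `i` of the direct sum
`H = ⊕_{i ∈ V} h_i` (semifinite CTOQW with `h_i = ℂ^d`): this is `ρ ⊗ |i⟩⟨i|`. -/
def siteEmbed {V : Type*} [DecidableEq V] {d : ℕ} (i : V)
    (ρ : Matrix (Fin d) (Fin d) ℂ) : Matrix (V × Fin d) (V × Fin d) ℂ :=
  fun a b => if a.1 = i ∧ b.1 = i then ρ a.2 b.2 else 0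

/-- The projection `P_k = I ⊗ |k⟩⟨k|` onto the block of site `k`. -/
def siteProj {V : Type*} [DecidableEq V] (d : ℕ) (k : V) :
    Matrix (V × Fin d) (V × Fin d) ℂ :=
  Matrix.diagonal fun x => if x.1 = k then 1 else 0

/-- The `k`-th diagonal block of an operator on `⊕_{i ∈ V} ℂ^d`. -/
def siteBlock {V : Type*} {d : ℕ} (k : V) (X : Matrix (V × Fin d) (V × Fin d) ℂ) :
    Matrix (Fin d) (Fin d) ℂ :=
  fun x y => X (k, x) (k, y)

/-- Transition probability `p_{ji;ρ}(t) = Tr(e^{tL}(ρ ⊗ |i⟩⟨i|)(I ⊗ |j⟩⟨j|))` of a CTOQW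
whose semigroup `e^{tL}` is given by `T`. -/
noncomputable def transP {V : Type*} [Fintype V] [DecidableEq V] {d : ℕ}
    (T : ℝ → Matrix (V × Fin d) (V × Fin d) ℂ →ₗ[ℂ] Matrix (V × Fin d) (V × Fin d) ℂ)
    (j i : V) (ρ : Matrix (Fin d) (Fin d) ℂ) (t : ℝ) : ℝ :=
  ((T t (siteEmbed i ρ) * siteProj d j).trace).re

/-! ### Auxiliary lemmas -/

lemma siteEmbed_posSemidef {V : Type*} [Fintype V] [DecidableEq V] {d : ℕ} (i : V)
    {τ : Matrix (Fin d) (Fin d) ℂ} (hτ : τ.PosSemidef) : (siteEmbed i τ).PosSemidef := by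
  refine PosSemidef.of_dotProduct_mulVec_nonneg ?_ ?_
  · ext a b
    simp only [conjTranspose_apply, siteEmbed]
    by_cases h1 : a.1 = i <;> by_cases h2 : b.1 = i <;>
      simp [h1, h2, hτ.1.apply]
  · intro x
    have key : star x ⬝ᵥ (siteEmbed i τ) *ᵥ x
        = star (fun p => x (i, p)) ⬝ᵥ τ *ᵥ (fun p => x (i, p)) := by
      simp only [siteEmbed, dotProduct, mulVec, Pi.star_apply, Fintype.sum_prod_type]
      rw [Finset.sum_eq_single i]
      · congr 1; ext p
        congr 1
        rw [Finset.sum_eq_single i]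
        · simp [dotProduct]
        · intro w _ hw; simp [hw]
        · simp
      · intro v _ hv; simp [hv]
      · simp
    rw [key]
    exact hτ.dotProduct_mulVec_nonneg _

lemma siteEmbed_add {V : Type*} [DecidableEq V] {d : ℕ} (i : V)
    (A B : Matrix (Fin d) (Fin d) ℂ) :
    siteEmbed i (A + B) = siteEmbed i A + siteEmbed i B := by
  funext a b
  simp only [siteEmbed, Matrix.add_apply]
  split <;> simp

lemma siteEmbed_smul {V : Type*} [DecidableEq V] {d : ℕ} (i : V) (c : ℂ)
    (A : Matrix (Fin d) (Fin d) ℂ) :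
    siteEmbed i (c • A) = c • siteEmbed i A := by
  funext a b
  simp only [siteEmbed, Matrix.smul_apply, smul_eq_mul]
  split <;> simp

lemma trace_mul_siteProj_re_nonneg {V : Type*} [Fintype V] [DecidableEq V] {d : ℕ} (k : V)
    {A : Matrix (V × Fin d) (V × Fin d) ℂ} (hA : A.PosSemidef) :
    0 ≤ ((A * siteProj d k).trace).re := by
  have hdiag : ∀ x : V × Fin d, 0 ≤ (A x x).re := by
    intro x
    have := hA.re_dotProduct_nonneg (Pi.single x 1)
    simpa [dotProduct, mulVec, Pi.single_apply, Finset.mul_sum] using this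
  have h1 : ∀ x : V × Fin d, ((A * siteProj d k) x x).re
      = if x.1 = k then (A x x).re else 0 := by
    intro x
    have : (A * siteProj d k) x x = if x.1 = k then A x x else 0 := by
      simp only [Matrix.mul_apply, siteProj, Matrix.diagonal_apply, mul_ite, mul_one, mul_zero,
        ite_and]
      rw [Finset.sum_eq_single x]
      · simp
      · intro y _ hy; simp [hy]
      · simp
    rw [this]
    split <;> simp
  have h2 : ((A * siteProj d k).trace).re = ∑ x : V × Fin d, ((A * siteProj d k) x x).re := by
    simp [Matrix.trace, Matrix.diag, Complex.re_sum]
  rw [h2]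
  refine Finset.sum_nonneg fun x _ => ?_
  rw [h1]
  split <;> simp [hdiag x]

/-- A positive semidefinite quadratic form value equals its (real, nonnegative) real part. -/
lemma quad_eq_re {n : Type*} [Fintype n] {M : Matrix n n ℂ} (hM : M.PosSemidef) (x : n → ℂ) :
    star x ⬝ᵥ M *ᵥ x = ((star x ⬝ᵥ M *ᵥ x).re : ℂ) := by
  have h := hM.dotProduct_mulVec_nonneg x
  rw [Complex.le_def] at h
  exact Complex.ext rfl (by simpa using h.2.symm)

set_option maxHeartbeats 1000000 in
/-- Existence of `α > 0` with `ρ - α σ ⪰ 0` for `ρ` positive definite. -/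
lemma exists_alpha {d : ℕ} (hd : Nonempty (Fin d)) {σ ρ : Matrix (Fin d) (Fin d) ℂ}
    (hσ : σ.PosSemidef) (hρ : ρ.PosDef) :
    ∃ α : ℝ, 0 < α ∧ (ρ - (α : ℂ) • σ).PosSemidef := by
  classical
  set f : (Fin d → ℂ) → ℝ := fun x => (star x ⬝ᵥ ρ *ᵥ x).re with hf
  set g : (Fin d → ℂ) → ℝ := fun x => (star x ⬝ᵥ σ *ᵥ x).re with hg
  have hquadcont : ∀ M : Matrix (Fin d) (Fin d) ℂ,
      Continuous fun x : Fin d → ℂ => (star x ⬝ᵥ M *ᵥ x).re := by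
    intro M
    refine Complex.continuous_re.comp ?_
    simp only [dotProduct, mulVec, Pi.star_apply]
    refine continuous_finset_sum _ fun a _ => Continuous.mul ?_ ?_
    · exact Complex.continuous_conj.comp (continuous_apply a)
    · exact continuous_finset_sum _ fun b _ => continuous_const.mul (continuous_apply b)
  have hS : IsCompact (Metric.sphere (0 : Fin d → ℂ) 1) := isCompact_sphere _ _
  have hSne : (Metric.sphere (0 : Fin d → ℂ) 1).Nonempty := by
    obtain ⟨j⟩ := hd
    set v : Fin d → ℂ := Pi.single j 1 with hv
    have hx : v ≠ 0 := by
      intro h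
      have := congrFun h j
      simp [hv, Pi.single_apply] at this
    refine ⟨(‖v‖⁻¹ : ℂ) • v, ?_⟩
    simp only [Metric.mem_sphere, dist_zero_right]
    exact norm_smul_inv_norm hx
  obtain ⟨x₀, hx₀S, hx₀min'⟩ := hS.exists_isMinOn hSne (hquadcont ρ).continuousOn
  obtain ⟨y₀, hy₀S, hy₀max'⟩ := hS.exists_isMaxOn hSne (hquadcont σ).continuousOn
  have hx₀min : ∀ y ∈ Metric.sphere (0 : Fin d → ℂ) 1,
      (star x₀ ⬝ᵥ ρ *ᵥ x₀).re ≤ (star y ⬝ᵥ ρ *ᵥ y).re := fun y hy => hx₀min' hy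
  have hy₀max : ∀ y ∈ Metric.sphere (0 : Fin d → ℂ) 1,
      (star y ⬝ᵥ σ *ᵥ y).re ≤ (star y₀ ⬝ᵥ σ *ᵥ y₀).re := fun y hy => hy₀max' hy
  set m : ℝ := f x₀ with hm
  set M : ℝ := g y₀ with hM
  have hx₀ne : x₀ ≠ 0 := by
    intro h
    rw [h] at hx₀S
    simp at hx₀S
  have hmpos : 0 < m := hρ.re_dotProduct_pos hx₀ne
  have hMnn : 0 ≤ M := hσ.re_dotProduct_nonneg y₀
  refine ⟨m / (M + 1), div_pos hmpos (by linarith), ?_⟩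
  set α : ℝ := m / (M + 1) with hα
  have hαpos : 0 < α := div_pos hmpos (by linarith)
  have hαM : α * (M + 1) = m := div_mul_cancel₀ m (by linarith)
  -- scaling of quadratic forms
  have hscale : ∀ (N : Matrix (Fin d) (Fin d) ℂ) (c : ℝ) (x : Fin d → ℂ),
      star ((c : ℂ) • x) ⬝ᵥ N *ᵥ ((c : ℂ) • x) = (c : ℂ) ^ 2 * (star x ⬝ᵥ N *ᵥ x) := by
    intro N c x
    rw [star_smul, mulVec_smul, smul_dotProduct, dotProduct_smul]
    simp [Complex.star_def, Complex.conj_ofReal]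
    ring
  -- key pointwise inequality
  have key : ∀ x : Fin d → ℂ, α * g x ≤ f x := by
    intro x
    by_cases hx : x = 0
    · simp [hx, hf, hg, dotProduct]
    · set c : ℝ := ‖x‖ with hc
      have hcpos : 0 < c := norm_pos_iff.mpr hx
      set y : Fin d → ℂ := ((c⁻¹ : ℝ) : ℂ) • x with hy
      have hyn : ‖y‖ = 1 := by
        have hnc : ‖((c⁻¹ : ℝ) : ℂ)‖ = c⁻¹ := by
          rw [Complex.norm_real, Real.norm_eq_abs, abs_of_pos (inv_pos.mpr hcpos)]
        rw [hy, norm_smul, hnc, hc, inv_mul_cancel₀ (ne_of_gt hcpos)]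
      have hyS : y ∈ Metric.sphere (0 : Fin d → ℂ) 1 := by
        simpa [Metric.mem_sphere, dist_zero_right] using hyn
      have hcne : (c : ℂ) ≠ 0 := Complex.ofReal_ne_zero.mpr (ne_of_gt hcpos)
      have hxy : x = (c : ℂ) • y := by
        rw [hy, smul_smul]
        rw [show ((c : ℂ) * ((c⁻¹ : ℝ) : ℂ)) = 1 by
          push_cast
          exact mul_inv_cancel₀ hcne]
        simp
      have hfx : f x = c ^ 2 * f y := by
        rw [hf]; simp only []
        rw [hxy, hscale, show ((c : ℂ) ^ 2) = ((c ^ 2 : ℝ) : ℂ) by push_cast; ring,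
          Complex.re_ofReal_mul]
      have hgx : g x = c ^ 2 * g y := by
        rw [hg]; simp only []
        rw [hxy, hscale, show ((c : ℂ) ^ 2) = ((c ^ 2 : ℝ) : ℂ) by push_cast; ring,
          Complex.re_ofReal_mul]
      have h1 : m ≤ f y := hx₀min y hyS
      have h2 : g y ≤ M := hy₀max y hyS
      have h3 : 0 ≤ g y := hσ.re_dotProduct_nonneg y
      have h4 : α * g y ≤ f y := by nlinarith
      rw [hfx, hgx]
      calc α * (c ^ 2 * g y) = c ^ 2 * (α * g y) := by ring
        _ ≤ c ^ 2 * f y := by nlinarith [sq_nonneg c]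
  refine PosSemidef.of_dotProduct_mulVec_nonneg ?_ ?_
  · have h1 := hρ.1
    have h2 := hσ.1
    unfold Matrix.IsHermitian at *
    rw [conjTranspose_sub, conjTranspose_smul, h1, h2]
    congr 1
    rw [Complex.star_def, Complex.conj_ofReal]
  · intro x
    have e1 := quad_eq_re hρ.posSemidef x
    have e2 := quad_eq_re hσ x
    have hkey : α * (star x ⬝ᵥ σ *ᵥ x).re ≤ (star x ⬝ᵥ ρ *ᵥ x).re := key x
    rw [sub_mulVec, dotProduct_sub, smul_mulVec, dotProduct_smul, e1, e2,
      smul_eq_mul, ← Complex.ofReal_mul, ← Complex.ofReal_sub]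
    exact Complex.zero_le_real.mpr (by linarith)

set_option maxHeartbeats 1000000 in
theorem ctoqw_faithful_recurrent {V : Type*} [Fintype V] [DecidableEq V] {d : ℕ}
    (T : ℝ → Matrix (V × Fin d) (V × Fin d) ℂ →ₗ[ℂ] Matrix (V × Fin d) (V × Fin d) ℂ)
    (hT0 : T 0 = LinearMap.id)
    (hTsemi : ∀ s t : ℝ, 0 ≤ s → 0 ≤ t → T (s + t) = (T s).comp (T t))
    (hTpos : ∀ t : ℝ, 0 ≤ t → ∀ X, X.PosSemidef → (T t X).PosSemidef)
    (hTtr : ∀ t : ℝ, 0 ≤ t → ∀ X, (T t X).trace = X.trace)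
    (hTcont : ∀ X, Continuous fun t => T t X)
    (i : V) (σ : Matrix (Fin d) (Fin d) ℂ) (hσ : σ.PosSemidef) (hσ1 : σ.trace = 1)
    (hrec : (∫⁻ t in Set.Ici (0 : ℝ), ENNReal.ofReal (transP T i i σ t)) = ⊤)
    (ρ : Matrix (Fin d) (Fin d) ℂ) (hρ : ρ.PosDef) (hρ1 : ρ.trace = 1) :
    (∫⁻ t in Set.Ici (0 : ℝ), ENNReal.ofReal (transP T i i ρ t)) = ⊤ := by
  classical
  have hd : Nonempty (Fin d) := by
    by_contra h
    rw [not_nonempty_iff] at h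
    rw [Matrix.trace] at hρ1
    simp [Finset.univ_eq_empty] at hρ1
  obtain ⟨α, hαpos, hpsd⟩ := exists_alpha hd hσ hρ
  -- pointwise: transP T i i ρ t ≥ α * transP T i i σ t for t ≥ 0
  have hpt : ∀ t : ℝ, 0 ≤ t → α * transP T i i σ t ≤ transP T i i ρ t := by
    intro t ht
    have hdecomp : siteEmbed (V := V) i ρ
        = siteEmbed i (ρ - (α : ℂ) • σ) + (α : ℂ) • siteEmbed i σ := by
      rw [← siteEmbed_smul, ← siteEmbed_add, sub_add_cancel]
    have : transP T i i ρ t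
        = ((T t (siteEmbed i (ρ - (α : ℂ) • σ)) * siteProj d i).trace).re
          + α * transP T i i σ t := by
      unfold transP
      rw [hdecomp, map_add, LinearMap.map_smul, add_mul, smul_mul_assoc, trace_add, trace_smul]
      simp [Complex.add_re, smul_eq_mul, Complex.mul_re]
    rw [this]
    have hnn : 0 ≤ ((T t (siteEmbed i (ρ - (α : ℂ) • σ)) * siteProj d i).trace).re :=
      trace_mul_siteProj_re_nonneg i (hTpos t ht _ (siteEmbed_posSemidef i hpsd))
    linarith
  -- now the integral estimate
  rw [eq_top_iff]
  have hα0 : ENNReal.ofReal α ≠ 0 := by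
    simp [ENNReal.ofReal_eq_zero, not_le, hαpos]
  calc (⊤ : ENNReal) = ENNReal.ofReal α * ∫⁻ t in Set.Ici (0 : ℝ),
        ENNReal.ofReal (transP T i i σ t) := by
        rw [hrec, ENNReal.mul_top hα0]
    _ = ∫⁻ t in Set.Ici (0 : ℝ), ENNReal.ofReal α * ENNReal.ofReal (transP T i i σ t) := by
        rw [lintegral_const_mul' _ _ ENNReal.ofReal_ne_top]
    _ = ∫⁻ t in Set.Ici (0 : ℝ), ENNReal.ofReal (α * transP T i i σ t) := by
        refine lintegral_congr fun t => ?_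
        rw [ENNReal.ofReal_mul hαpos.le]
    _ ≤ ∫⁻ t in Set.Ici (0 : ℝ), ENNReal.ofReal (transP T i i ρ t) := by
        refine lintegral_mono_ae ?_
        filter_upwards [ae_restrict_mem measurableSet_Ici] with t ht
        exact ENNReal.ofReal_le_ofReal (hpt t ht)
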